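/- For a positive random variable X with E[X] = α/λ and a > 0, the standardized gamma Fisher information satisfies J_{st,γ(α,λ)}(aX) = J_{st,γ(α,aλ)}(X) = (1/a)·J_{st,γ(α,λ)}(X) + α(a-1)²/a. -/

import Mathlib

open MeasureTheory ProbabilityTheory Real

/-- Standardized gamma Fisher information of a positive random variable with density `p`:
`J_{st,γ(α,λ)}(X) = (1/λ)·E[X·(ρ_X(X) + λ - (α-1)/X)²]` where `ρ_X = p'/p`. -/
noncomputable def Jstgamma (α lam : ℝ) (p : ℝ → ℝ) : ℝ :=
  (1 / lam) * ∫ x in Set.Ioi (0 : ℝ),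
    x * (deriv p x / p x + lam - (α - 1) / x) ^ 2 * p x

/-- **Scaling of standardized gamma Fisher information.** For a positive `X` with density `p`,
mean `E[X] = α/λ` and `a > 0`:
`J_{st,γ(α,λ)}(aX) = J_{st,γ(α,aλ)}(X) = (1/a)·J_{st,γ(α,λ)}(X) + α(a-1)²/a`.
(The density of `aX` is `x ↦ p(x/a)/a`.) -/
theorem Jstgamma_scaling (α lam a : ℝ) (hα : 0 < α) (hlam : 0 < lam) (ha : 0 < a)
    (p : ℝ → ℝ) (hp_nonneg : ∀ x, 0 ≤ p x) (hp_supp : ∀ x ≤ (0 : ℝ), p x = 0)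
    (hp_meas : Measurable p)
    (hp_diff : ∀ x ∈ Set.Ioi (0 : ℝ), DifferentiableAt ℝ p x)
    (hp_prob : ∫ x in Set.Ioi (0 : ℝ), p x = 1)
    (hmean : ∫ x in Set.Ioi (0 : ℝ), x * p x = α / lam)
    (hscore : ∫ x in Set.Ioi (0 : ℝ), x * (deriv p x / p x) * p x = -1)
    (hint : IntegrableOn
      (fun x => x * (deriv p x / p x + lam - (α - 1) / x) ^ 2 * p x) (Set.Ioi 0))
    (hint' : IntegrableOn
      (fun x => x * (deriv p x / p x + a * lam - (α - 1) / x) ^ 2 * p x) (Set.Ioi 0)) :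
    Jstgamma α lam (fun x => p (x / a) / a) = Jstgamma α (a * lam) p ∧
    Jstgamma α (a * lam) p = (1 / a) * Jstgamma α lam p + α * (a - 1) ^ 2 / a := by
  have ha' : a ≠ 0 := ha.ne'
  have hlam' : lam ≠ 0 := hlam.ne'
  set g : ℝ → ℝ := fun y => y * (deriv p y / p y + a * lam - (α - 1) / y) ^ 2 * p y with hg
  constructor
  · -- change of variables x = a y
    have h1 : ∀ x ∈ Set.Ioi (0 : ℝ),
        x * (deriv (fun x => p (x / a) / a) x / (p (x / a) / a) + lam - (α - 1) / x) ^ 2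
          * (p (x / a) / a) = (fun y => (1 / a ^ 2) * g y) (x * a⁻¹) := by
      intro x hx
      have hx0 : (0:ℝ) < x := hx
      have hy0 : (0:ℝ) < x / a := by positivity
      have hder : deriv (fun x => p (x / a) / a) x = deriv p (x / a) * (1 / a) / a := by
        have hd : HasDerivAt p (deriv p (x / a)) (x / a) :=
          (hp_diff _ hy0).hasDerivAt
        have h2 : HasDerivAt (fun x : ℝ => x / a) (1 / a) x := by
          simpa using (hasDerivAt_id x).div_const a
        exact ((hd.comp x h2).div_const a).deriv
      rw [hder]
      have hxa : x * a⁻¹ = x / a := by rw [div_eq_mul_inv]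
      rw [hxa]
      simp only [hg]
      rcases eq_or_ne (p (x / a)) 0 with hz | hz
      · simp [hz]
      · have hx' : x ≠ 0 := hx0.ne'
        have hy' : x / a ≠ 0 := hy0.ne'
        field_simp
    have h2 : (∫ x in Set.Ioi (0:ℝ),
        x * (deriv (fun x => p (x / a) / a) x / (p (x / a) / a) + lam - (α - 1) / x) ^ 2
          * (p (x / a) / a))
        = ∫ x in Set.Ioi (0:ℝ), (fun y => (1 / a ^ 2) * g y) (x * a⁻¹) :=
      setIntegral_congr_fun measurableSet_Ioi h1
    have h3 := integral_comp_mul_right_Ioi (fun y => (1 / a ^ 2) * g y) 0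
      (inv_pos.mpr ha)
    simp only [zero_mul, inv_inv, smul_eq_mul] at h3
    simp only [Jstgamma]
    rw [h2, h3, integral_const_mul]
    rw [show (∫ x in Set.Ioi (0:ℝ),
        x * (deriv p x / p x + a * lam - (α - 1) / x) ^ 2 * p x) = ∫ x in Set.Ioi (0:ℝ), g x
      from rfl]
    field_simp
  · -- expansion of the square
    set c : ℝ := (a - 1) * lam with hc
    set f2 : ℝ → ℝ := fun x => x * (deriv p x / p x) * p x with hf2
    set f3 : ℝ → ℝ := fun x => x * p x with hf3
    have i1 := hint
    have i2 : IntegrableOn f2 (Set.Ioi 0) := by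
      by_contra h
      rw [MeasureTheory.integral_undef h] at hscore
      norm_num at hscore
    have i3 : IntegrableOn f3 (Set.Ioi 0) := by
      by_contra h
      rw [MeasureTheory.integral_undef h] at hmean
      have : α / lam ≠ 0 := by positivity
      exact this hmean.symm
    have i4 : IntegrableOn p (Set.Ioi 0) := by
      by_contra h
      rw [MeasureTheory.integral_undef h] at hp_prob
      norm_num at hp_prob
    have hpt : ∀ x ∈ Set.Ioi (0:ℝ), g x =
        x * (deriv p x / p x + lam - (α - 1) / x) ^ 2 * p x
          + ((2 * c) * f2 x + ((2 * c * lam + c ^ 2) * f3 x + (-(2 * c * (α - 1))) * p x)) := by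
      intro x hx
      have hx' : (x:ℝ) ≠ 0 := (Set.mem_Ioi.mp hx).ne'
      simp only [hg, hf2, hf3, hc]
      rcases eq_or_ne (p x) 0 with hz | hz
      · simp [hz]
      · field_simp
        ring
    have hsum : ∫ x in Set.Ioi (0:ℝ), g x
        = (∫ x in Set.Ioi (0:ℝ), x * (deriv p x / p x + lam - (α - 1) / x) ^ 2 * p x)
          + ((2 * c) * (∫ x in Set.Ioi (0:ℝ), f2 x)
            + ((2 * c * lam + c ^ 2) * (∫ x in Set.Ioi (0:ℝ), f3 x)
              + (-(2 * c * (α - 1))) * (∫ x in Set.Ioi (0:ℝ), p x))) := by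
      have j2 : IntegrableOn (fun x => (2 * c) * f2 x) (Set.Ioi 0) := i2.const_mul (2 * c)
      have j3 : IntegrableOn (fun x => (2 * c * lam + c ^ 2) * f3 x) (Set.Ioi 0) :=
        i3.const_mul (2 * c * lam + c ^ 2)
      have j4 : IntegrableOn (fun x => (-(2 * c * (α - 1))) * p x) (Set.Ioi 0) :=
        i4.const_mul (-(2 * c * (α - 1)))
      have j34 : IntegrableOn
          (fun x => (2 * c * lam + c ^ 2) * f3 x + (-(2 * c * (α - 1))) * p x)
          (Set.Ioi 0) := j3.add j4
      have j234 : IntegrableOn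
          (fun x => (2 * c) * f2 x
            + ((2 * c * lam + c ^ 2) * f3 x + (-(2 * c * (α - 1))) * p x))
          (Set.Ioi 0) := j2.add j34
      rw [setIntegral_congr_fun measurableSet_Ioi hpt,
        integral_add i1 j234, integral_add j2 j34,
        integral_add j3 j4, integral_const_mul, integral_const_mul, integral_const_mul]
    simp only [Jstgamma]
    rw [show (∫ x in Set.Ioi (0:ℝ),
        x * (deriv p x / p x + a * lam - (α - 1) / x) ^ 2 * p x) = ∫ x in Set.Ioi (0:ℝ), g x
      from rfl, hsum, hscore, hmean, hp_prob]
    simp only [hf2, hf3] at *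
    field_simp
    ring
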